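/- Let (L,[·,·]) be a Lie algebra over a field F of characteristic 0 with representation ρ: L → End(V), and let φ: L×L → V be a Lie algebra 2-cocycle. Define ω(x,y,z) := φ([x,y],z) − ρ(z)φ(x,y). Then ω is a 3-cocycle of the associated Lie triple system (L, [·,·,·] = [[·,·],·]; θ_ρ): ω(x,x,y) = 0, ω(x,y,z) + ω(y,z,x) + ω(z,x,y) = 0, and for all x₁,x₂,y₁,y₂,y₃ ∈ L, ω(x₁,x₂,[y₁,y₂,y₃]) + D_ρ(x₁,x₂)ω(y₁,y₂,y₃) = ω([x₁,x₂,y₁],y₂,y₃) + ω(y₁,[x₁,x₂,y₂],y₃) + ω(y₁,y₂,[x₁,x₂,y₃]) + θ_ρ(y₂,y₃)ω(x₁,x₂,y₁) − θ_ρ(y₁,y₃)ω(x₁,x₂,y₂) + D_ρ(y₁,y₂)ω(x₁,x₂,y₃). -/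
import Mathlib


variable {F L V : Type*} [Field F] [CharZero F] [LieRing L] [LieAlgebra F L]
  [AddCommGroup V] [Module F V]

/-- `θ_ρ(x,y) := ρ(y)ρ(x)`, the representation of the associated Lie triple system. -/
def thetaRho (ρ : L →ₗ[F] Module.End F V) (x y : L) : Module.End F V := ρ y * ρ x

/-- `D_ρ(x,y) := θ_ρ(y,x) − θ_ρ(x,y)`. -/
def DRho (ρ : L →ₗ[F] Module.End F V) (x y : L) : Module.End F V :=
  thetaRho ρ y x - thetaRho ρ x y

/-- `ω(x,y,z) := φ([x,y],z) − ρ(z)φ(x,y)`. -/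
def omegaOf (ρ : L →ₗ[F] Module.End F V) (φ : L →ₗ[F] L →ₗ[F] V) (x y z : L) : V :=
  φ ⁅x, y⁆ z - ρ z (φ x y)

/-- if `φ` is a Lie algebra `2`-cocycle, then
`ω(x,y,z) := φ([x,y],z) − ρ(z)φ(x,y)` is a `3`-cocycle of the associated Lie triple
system `(L, [[·,·],·]; θ_ρ)`. -/
theorem lie_two_cocycle_to_lts_three_cocycle
    (ρ : L →ₗ[F] Module.End F V)
    (hρ : ∀ x y, ρ ⁅x, y⁆ = ρ x * ρ y - ρ y * ρ x)
    (φ : L →ₗ[F] L →ₗ[F] V)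
    (halt : ∀ x : L, φ x x = 0)
    (hcoc : ∀ x y z : L,
      ρ x (φ y z) - ρ y (φ x z) + ρ z (φ x y)
        - φ ⁅x, y⁆ z + φ ⁅x, z⁆ y - φ ⁅y, z⁆ x = 0) :
    (∀ x y : L, omegaOf ρ φ x x y = 0) ∧
    (∀ x y z : L, omegaOf ρ φ x y z + omegaOf ρ φ y z x + omegaOf ρ φ z x y = 0) ∧
    (∀ x₁ x₂ y₁ y₂ y₃ : L,
      omegaOf ρ φ x₁ x₂ ⁅⁅y₁, y₂⁆, y₃⁆ + DRho ρ x₁ x₂ (omegaOf ρ φ y₁ y₂ y₃)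
        = omegaOf ρ φ ⁅⁅x₁, x₂⁆, y₁⁆ y₂ y₃ + omegaOf ρ φ y₁ ⁅⁅x₁, x₂⁆, y₂⁆ y₃
          + omegaOf ρ φ y₁ y₂ ⁅⁅x₁, x₂⁆, y₃⁆
          + thetaRho ρ y₂ y₃ (omegaOf ρ φ x₁ x₂ y₁)
          - thetaRho ρ y₁ y₃ (omegaOf ρ φ x₁ x₂ y₂)
          + DRho ρ y₁ y₂ (omegaOf ρ φ x₁ x₂ y₃)) := by
  have hsk : ∀ u v : L, φ u v = - φ v u := by
    intro u v
    have h := halt (u + v)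
    simp [map_add, halt] at h
    linear_combination (norm := module) h
  refine ⟨?_, ?_, ?_⟩
  · intro x y
    simp [omegaOf, halt]
  · intro x y z
    have h := hcoc x y z
    simp only [omegaOf]
    have hl : φ ⁅x, z⁆ y = - φ ⁅z, x⁆ y := by rw [← lie_skew x z, map_neg, LinearMap.neg_apply]
    have hr : ρ y (φ x z) = - ρ y (φ z x) := by rw [hsk x z]; simp
    linear_combination (norm := module) -h + hl - hr
  · intro x₁ x₂ y₁ y₂ y₃
    have h1 := hcoc ⁅x₁, x₂⁆ ⁅y₁, y₂⁆ y₃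
    have h2 := congrArg (ρ y₃) (hcoc ⁅x₁, x₂⁆ y₁ y₂)
    rw [leibniz_lie] at h1
    simp only [map_add, map_sub, map_zero, LinearMap.add_apply, LinearMap.sub_apply] at h1 h2
    have e1 : φ ⁅⁅x₁, x₂⁆, y₃⁆ ⁅y₁, y₂⁆ = - φ ⁅y₁, y₂⁆ ⁅⁅x₁, x₂⁆, y₃⁆ := hsk _ _
    have e2 : φ ⁅⁅y₁, y₂⁆, y₃⁆ ⁅x₁, x₂⁆ = - φ ⁅x₁, x₂⁆ ⁅⁅y₁, y₂⁆, y₃⁆ := hsk _ _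
    have e3 : ρ y₃ (φ ⁅⁅x₁, x₂⁆, y₂⁆ y₁) = - ρ y₃ (φ y₁ ⁅⁅x₁, x₂⁆, y₂⁆) := by
      rw [hsk]; simp
    have e4 : ρ y₃ (φ ⁅y₁, y₂⁆ ⁅x₁, x₂⁆) = - ρ y₃ (φ ⁅x₁, x₂⁆ ⁅y₁, y₂⁆) := by
      rw [hsk]; simp
    simp only [omegaOf, DRho, thetaRho, hρ, LinearMap.sub_apply, Module.End.mul_apply, map_sub] at h1 h2 ⊢
    linear_combination (norm := module) h1 - h2 - e1 + e2 + e3 - e4
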